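/- Let s be a binary sequence of period N whose support set D_s is an (N, (N+1)/2, (N+1)/4) cyclic difference set, and let p be an odd prime with p ∤ (N+1). Then gcd(P_s(x), 1-x^N) = 1 in F_p[x]; equivalently, the linear complexity of s over F_p equals N. -/

import Mathlib

open Polynomial

theorem stmt18 (N : ℕ) [NeZero N] (hN4 : N % 4 = 3) (s : ZMod N → ℤ)
    (hbin : ∀ i, s i = 0 ∨ s i = 1)
    (hcard : (Finset.univ.filter fun i : ZMod N => s i = 1).card = (N + 1) / 2)
    (hdiff : ∀ τ : ZMod N, τ ≠ 0 →
      ((Finset.univ.filter fun i : ZMod N => s i = 1) ∩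
        ((Finset.univ.filter fun i : ZMod N => s i = 1)).image (· + τ)).card = (N + 1) / 4)
    (p : ℕ) [Fact p.Prime] (hpodd : p ≠ 2) (hpN : ¬ p ∣ (N + 1)) :
    IsCoprime (∑ i ∈ Finset.range N, C ((s (i : ZMod N) : ZMod p)) * X ^ i)
        (1 - X ^ N : (ZMod p)[X]) ∧
    N - (EuclideanDomain.gcd
        (∑ i ∈ Finset.range N, C ((s (i : ZMod N) : ZMod p)) * X ^ i)
        (1 - X ^ N)).natDegree = N := by
  have h4 : 4 ∣ N + 1 := by omega
  have hpk : ¬ p ∣ (N + 1) / 2 := fun h => hpN (h.trans (Nat.div_dvd_of_dvd (by omega)))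
  have hpl : ¬ p ∣ (N + 1) / 4 := fun h => hpN (h.trans (Nat.div_dvd_of_dvd h4))
  have hkl : (N + 1) / 2 = 2 * ((N + 1) / 4) := by omega
  set K := AlgebraicClosure (ZMod p) with hK
  haveI : CharP K p := charP_of_injective_algebraMap (algebraMap (ZMod p) K).injective p
  have hcast : ∀ m : ℕ, ¬ p ∣ m → (m : K) ≠ 0 := fun m hm h0 =>
    hm ((CharP.cast_eq_zero_iff K p m).mp h0)
  set D := Finset.univ.filter (fun i : ZMod N => s i = 1) with hD
  have key : IsCoprime (∑ i ∈ Finset.range N, C ((s (i : ZMod N) : ZMod p)) * X ^ i)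
      (1 - X ^ N : (ZMod p)[X]) := by
    apply (Polynomial.isCoprime_iff_aeval_ne_zero_of_isAlgClosed (ZMod p) K _ _).mpr
    intro x
    by_cases hg : (aeval x) (1 - X ^ N : (ZMod p)[X]) = 0
    swap
    · exact Or.inr hg
    left
    have hx : x ^ N = 1 := by
      have h1 : (1 : K) - x ^ N = 0 := by simpa using hg
      exact (sub_eq_zero.mp h1).symm
    have hxpow : ∀ m : ℕ, x ^ m = x ^ (m % N) := by
      intro m
      conv_lhs => rw [← Nat.div_add_mod m N]
      rw [pow_add, pow_mul, hx, one_pow, one_mul]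
    set e : ZMod N → K := fun τ => x ^ τ.val with he
    have hemul : ∀ a b : ZMod N, e (a + b) = e a * e b := by
      intro a b
      simp only [he]
      rw [← pow_add, ZMod.val_add, ← hxpow]
    set sh : ZMod N → K := fun i => algebraMap (ZMod p) K ((s i : ZMod p)) with hsh
    have hsh0 : ∀ i, s i = 0 → sh i = 0 := by intro i h; simp [hsh, h]
    have hsh1 : ∀ i, s i = 1 → sh i = 1 := by intro i h; simp [hsh, h]
    have hsum : ∀ g : ZMod N → K, ∑ i ∈ Finset.range N, g (i : ZMod N) = ∑ τ : ZMod N, g τ := by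
      intro g
      apply Finset.sum_bij' (fun (i : ℕ) (_ : i ∈ Finset.range N) => (i : ZMod N))
        (fun (τ : ZMod N) (_ : τ ∈ Finset.univ) => τ.val)
      · intro a ha; exact Finset.mem_univ _
      · intro a ha; exact Finset.mem_range.mpr (ZMod.val_lt a)
      · intro a ha; exact ZMod.val_cast_of_lt (Finset.mem_range.mp ha)
      · intro a ha; simp [ZMod.natCast_val, ZMod.cast_id]
      · intro a ha; rfl
    have hF : (aeval x) (∑ i ∈ Finset.range N, C ((s (i : ZMod N) : ZMod p)) * X ^ i)
        = ∑ τ : ZMod N, sh τ * e τ := by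
      rw [map_sum, ← hsum (fun τ => sh τ * e τ)]
      apply Finset.sum_congr rfl
      intro i hi
      rw [map_mul, aeval_C, aeval_X_pow]
      simp only [hsh, he]
      rw [ZMod.val_cast_of_lt (Finset.mem_range.mp hi)]
    rw [hF]
    have hcount : ∀ τ : ZMod N, ∑ i : ZMod N, sh i * sh (i - τ)
        = ((D ∩ D.image (· + τ)).card : K) := by
      intro τ
      have hmem : ∀ i : ZMod N, i ∈ D ∩ D.image (· + τ) ↔ (s i = 1 ∧ s (i - τ) = 1) := by
        intro i
        simp only [hD, Finset.mem_inter, Finset.mem_filter, Finset.mem_image, Finset.mem_univ,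
          true_and]
        constructor
        · rintro ⟨h1, a, h2, rfl⟩
          refine ⟨h1, ?_⟩
          rwa [add_sub_cancel_right]
        · rintro ⟨h1, h2⟩
          exact ⟨h1, ⟨i - τ, h2, by ring⟩⟩
      have hstep : ∑ i : ZMod N, sh i * sh (i - τ)
          = ∑ i ∈ D ∩ D.image (· + τ), sh i * sh (i - τ) := by
        symm
        apply Finset.sum_subset (Finset.subset_univ _)
        intro i _ hi
        rw [hmem i] at hi
        rcases hbin i with h | h
        · rw [hsh0 i h, zero_mul]
        · rcases hbin (i - τ) with h' | h'
          · rw [hsh0 _ h', mul_zero]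
          · exact absurd ⟨h, h'⟩ hi
      rw [hstep]
      rw [Finset.card_eq_sum_ones, Nat.cast_sum]
      apply Finset.sum_congr rfl
      intro i hi
      obtain ⟨h1, h2⟩ := (hmem i).mp hi
      rw [hsh1 i h1, hsh1 _ h2, mul_one, Nat.cast_one]
    by_cases hx1 : x = 1
    · -- F = card D = (N+1)/2 ≠ 0
      have hFval : ∑ τ : ZMod N, sh τ * e τ = (((N + 1) / 2 : ℕ) : K) := by
        have h1 : ∀ τ : ZMod N, sh τ * e τ = sh τ := by
          intro τ; simp [he, hx1]
        rw [Finset.sum_congr rfl fun τ _ => h1 τ]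
        have h2 : ∑ τ : ZMod N, sh τ = ∑ τ ∈ D, sh τ := by
          symm
          apply Finset.sum_subset (Finset.subset_univ _)
          intro i _ hi
          rw [hD, Finset.mem_filter] at hi
          push_neg at hi
          rcases hbin i with h | h
          · exact hsh0 i h
          · exact absurd h (hi (Finset.mem_univ i))
        rw [h2, ← hcard, Finset.card_eq_sum_ones, Nat.cast_sum]
        apply Finset.sum_congr rfl
        intro i hi
        rw [hD, Finset.mem_filter] at hi
        rw [hsh1 i hi.2, Nat.cast_one]
      rw [hFval]
      exact hcast _ hpk
    · -- geometric sum vanishes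
      have hT : ∑ τ : ZMod N, e τ = 0 := by
        rw [← hsum (fun τ => e τ)]
        have h1 : ∀ i ∈ Finset.range N, e (i : ZMod N) = x ^ i := by
          intro i hi; simp only [he]; rw [ZMod.val_cast_of_lt (Finset.mem_range.mp hi)]
        rw [Finset.sum_congr rfl h1]
        have hgs := geom_sum_mul x N
        rw [hx, sub_self] at hgs
        rcases mul_eq_zero.mp hgs with h | h
        · exact h
        · exact absurd (sub_eq_zero.mp h) hx1
      have hD0 : D ∩ D.image (· + (0 : ZMod N)) = D := by
        have : D.image (· + (0 : ZMod N)) = D := by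
          simp
        rw [this, Finset.inter_self]
      have he0 : e (0 : ZMod N) = 1 := by simp [he]
      have hFG : (∑ τ : ZMod N, sh τ * e τ) * (∑ τ : ZMod N, sh τ * e (-τ))
          = (((N + 1) / 4 : ℕ) : K) := by
        have step1 : ∀ i : ZMod N, ∑ j : ZMod N, (sh i * e i) * (sh j * e (-j))
            = ∑ τ : ZMod N, (sh i * sh (i - τ)) * e τ := by
          intro i
          apply Fintype.sum_equiv (Equiv.subLeft i)
          intro j
          simp only [Equiv.subLeft_apply, sub_sub_cancel]
          have h1 : e i * e (-j) = e (i - j) := by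
            rw [← hemul]; congr 1; ring
          calc sh i * e i * (sh j * e (-j))
              = sh i * sh j * (e i * e (-j)) := by ring
            _ = sh i * sh j * e (i - j) := by rw [h1]
        calc (∑ τ : ZMod N, sh τ * e τ) * (∑ τ : ZMod N, sh τ * e (-τ))
            = ∑ i : ZMod N, ∑ τ : ZMod N, (sh i * sh (i - τ)) * e τ := by
              rw [Finset.sum_mul_sum]
              exact Finset.sum_congr rfl fun i _ => step1 i
          _ = ∑ τ : ZMod N, ∑ i : ZMod N, (sh i * sh (i - τ)) * e τ := Finset.sum_comm
          _ = ∑ τ : ZMod N, (∑ i : ZMod N, sh i * sh (i - τ)) * e τ := by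
              simp_rw [Finset.sum_mul]
          _ = ∑ τ : ZMod N, ((D ∩ D.image (· + τ)).card : K) * e τ := by
              exact Finset.sum_congr rfl fun τ _ => by rw [hcount τ]
          _ = (((N + 1) / 4 : ℕ) : K) := by
              rw [← Finset.add_sum_erase _ _ (Finset.mem_univ (0 : ZMod N))]
              have hrest : ∑ τ ∈ Finset.univ.erase (0 : ZMod N),
                  ((D ∩ D.image (· + τ)).card : K) * e τ
                  = (((N + 1) / 4 : ℕ) : K) * ∑ τ ∈ Finset.univ.erase (0 : ZMod N), e τ := by
                rw [Finset.mul_sum]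
                exact Finset.sum_congr rfl fun τ hτ => by
                  rw [hdiff τ (Finset.ne_of_mem_erase hτ)]
              have herase : ∑ τ ∈ Finset.univ.erase (0 : ZMod N), e τ = -1 := by
                have h3 := Finset.add_sum_erase Finset.univ e (Finset.mem_univ (0 : ZMod N))
                rw [hT, he0] at h3
                have := eq_neg_of_add_eq_zero_right h3
                rw [this]
              rw [hrest, herase, hD0, hcard, he0, hkl]
              rw [Nat.cast_mul]
              push_cast
              ring
      intro h0
      rw [h0, zero_mul] at hFG
      exact hcast _ hpl hFG.symm
  refine ⟨key, ?_⟩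
  have hu : IsUnit (EuclideanDomain.gcd
      (∑ i ∈ Finset.range N, C ((s (i : ZMod N) : ZMod p)) * X ^ i)
      (1 - X ^ N : (ZMod p)[X])) := EuclideanDomain.gcd_isUnit_iff.mpr key
  rw [Polynomial.natDegree_eq_zero_of_isUnit hu]
  omega
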